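/- Key lemma, degenerate branches: assume the steady assumptions and let u ∈ USC(Γ) be a viscosity subsolution and v ∈ LSC(Γ) a viscosity supersolution of problem (P) such that max_Γ (u − v) = (u − v)(O). Set p̲_i = liminf_{t→0⁺}(u_i(t)−u_i(0))/t, p̄_i = limsup_{t→0⁺}(u_i(t)−u_i(0))/t, q̲_i = liminf_{t→0⁺}(v_i(t)−v_i(0))/t and q̄_i = limsup_{t→0⁺}(v_i(t)−v_i(0))/t. Then for every i ∈ 𝒟 = {i : a_i(O) = 0}: (a) for every p ∈ [p̲_i, p̄_i], λ u(O) + H_i(O, p) ≤ 0; and (b) for every q ∈ (q̲_i, q̄_i), λ v(O) + H_i(O, q) ≥ 0. -/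

import Mathlib

open Set Filter Topology

namespace Paper

/-- Data of the junction problem (P): a junction with `N` edges of lengths `ℓ i`,
glued at the junction point `O` (parameter `0` of each edge), with a (possibly
degenerate) diffusion `a i`, Hamiltonians `H i`, a Kirchhoff nonlinearity `F`,
Dirichlet data `h i` and a constant `lam > 0`.  Functions on the junction `Γ`
are represented edge-wise: `u : Fin N → ℝ → ℝ`, where only the values of
`u i` on `[0, ℓ i]` are relevant and `u i 0` represents the value at `O`. -/
structure Data (N : ℕ) where
  ℓ : Fin N → ℝ
  ℓ_pos : ∀ i, 0 < ℓ i
  lam : ℝ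
  lam_pos : 0 < lam
  a : Fin N → ℝ → ℝ
  a_nonneg : ∀ i, ∀ t ∈ Set.Icc (0:ℝ) (ℓ i), 0 ≤ a i t
  a_cont : ∀ i, ContinuousOn (a i) (Set.Icc 0 (ℓ i))
  H : Fin N → ℝ → ℝ → ℝ
  H_cont : ∀ i, ContinuousOn (fun q : ℝ × ℝ => H i q.1 q.2)
      ((Set.Icc 0 (ℓ i)) ×ˢ (Set.univ : Set ℝ))
  F : ℝ → (Fin N → ℝ) → ℝ
  F_cont : Continuous (fun q : ℝ × (Fin N → ℝ) => F q.1 q.2)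
  h : Fin N → ℝ

variable {N : ℕ}

/-- A family of edge functions defines a function on `Γ`: values at `O` agree. -/
def Glued (u : Fin N → ℝ → ℝ) : Prop := ∀ i j : Fin N, u i 0 = u j 0

/-- `u ∈ USC(Γ)`. -/
def IsUSC (D : Data N) (u : Fin N → ℝ → ℝ) : Prop :=
  ∀ i, UpperSemicontinuousOn (u i) (Set.Icc 0 (D.ℓ i))

/-- `u ∈ LSC(Γ)`. -/
def IsLSC (D : Data N) (u : Fin N → ℝ → ℝ) : Prop :=
  ∀ i, LowerSemicontinuousOn (u i) (Set.Icc 0 (D.ℓ i))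

/-- Test functions in `C²(Γ)` (edge-wise C², glued at `O`). -/
def IsTest (φ : Fin N → ℝ → ℝ) : Prop :=
  Glued φ ∧ ∀ i, ContDiff ℝ 2 (φ i)

/-- `G_i(r,p,X,x) = λ r − a_i(x) X + H_i(x,p)`. -/
def G (D : Data N) (i : Fin N) (r p X t : ℝ) : ℝ :=
  D.lam * r - D.a i t * X + D.H i t p

/-- Local maximum point of an edge-wise function at an interior edge point. -/
def LocalMaxEdge (D : Data N) (w : Fin N → ℝ → ℝ) (i : Fin N) (t : ℝ) : Prop :=
  ∃ δ > 0, ∀ s ∈ Set.Icc (0:ℝ) (D.ℓ i), |s - t| < δ → w i s ≤ w i t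

def LocalMinEdge (D : Data N) (w : Fin N → ℝ → ℝ) (i : Fin N) (t : ℝ) : Prop :=
  ∃ δ > 0, ∀ s ∈ Set.Icc (0:ℝ) (D.ℓ i), |s - t| < δ → w i t ≤ w i s

/-- Local maximum point at the junction point `O`. -/
def LocalMaxO (D : Data N) (w : Fin N → ℝ → ℝ) : Prop :=
  ∃ δ > 0, ∀ j, ∀ s ∈ Set.Icc (0:ℝ) (D.ℓ j), s < δ → w j s ≤ w j 0

def LocalMinO (D : Data N) (w : Fin N → ℝ → ℝ) : Prop :=
  ∃ δ > 0, ∀ j, ∀ s ∈ Set.Icc (0:ℝ) (D.ℓ j), s < δ → w j 0 ≤ w j s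

/-- Local maximum point at the boundary vertex `v_i` (parameter `ℓ i`). -/
def LocalMaxVert (D : Data N) (w : Fin N → ℝ → ℝ) (i : Fin N) : Prop :=
  ∃ δ > 0, ∀ s ∈ Set.Icc (0:ℝ) (D.ℓ i), D.ℓ i - s < δ → w i s ≤ w i (D.ℓ i)

def LocalMinVert (D : Data N) (w : Fin N → ℝ → ℝ) (i : Fin N) : Prop :=
  ∃ δ > 0, ∀ s ∈ Set.Icc (0:ℝ) (D.ℓ i), D.ℓ i - s < δ → w i (D.ℓ i) ≤ w i s

/-- Viscosity subsolution of problem (P), junction viscosity sense. -/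
def IsSubsol (D : Data N) (u : Fin N → ℝ → ℝ) : Prop :=
  IsUSC D u ∧ Glued u ∧
  ∀ φ : Fin N → ℝ → ℝ, IsTest φ →
    ((∀ i, ∀ t ∈ Set.Ioo (0:ℝ) (D.ℓ i),
        LocalMaxEdge D (fun j s => u j s - φ j s) i t →
        G D i (u i t) (deriv (φ i) t) (deriv (deriv (φ i)) t) t ≤ 0) ∧
     (LocalMaxO D (fun j s => u j s - φ j s) →
        (∃ i, G D i (u i 0) (deriv (φ i) 0) (deriv (deriv (φ i)) 0) 0 ≤ 0) ∨
        (∀ i, D.F (u i 0) (fun j => deriv (φ j) 0) ≤ 0)) ∧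
     (∀ i, LocalMaxVert D (fun j s => u j s - φ j s) i →
        G D i (u i (D.ℓ i)) (deriv (φ i) (D.ℓ i)) (deriv (deriv (φ i)) (D.ℓ i)) (D.ℓ i) ≤ 0 ∨
        u i (D.ℓ i) ≤ D.h i))

/-- Viscosity supersolution of problem (P), junction viscosity sense. -/
def IsSupersol (D : Data N) (v : Fin N → ℝ → ℝ) : Prop :=
  IsLSC D v ∧ Glued v ∧
  ∀ φ : Fin N → ℝ → ℝ, IsTest φ →
    ((∀ i, ∀ t ∈ Set.Ioo (0:ℝ) (D.ℓ i),
        LocalMinEdge D (fun j s => v j s - φ j s) i t →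
        0 ≤ G D i (v i t) (deriv (φ i) t) (deriv (deriv (φ i)) t) t) ∧
     (LocalMinO D (fun j s => v j s - φ j s) →
        (∃ i, 0 ≤ G D i (v i 0) (deriv (φ i) 0) (deriv (deriv (φ i)) 0) 0) ∨
        (∀ i, 0 ≤ D.F (v i 0) (fun j => deriv (φ j) 0))) ∧
     (∀ i, LocalMinVert D (fun j s => v j s - φ j s) i →
        0 ≤ G D i (v i (D.ℓ i)) (deriv (φ i) (D.ℓ i)) (deriv (deriv (φ i)) (D.ℓ i)) (D.ℓ i) ∨
        D.h i ≤ v i (D.ℓ i)))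

/-- Assumption (Ham) for the Hamiltonian `H i`, with constant `C`. -/
def Ham (D : Data N) (C : ℝ) (i : Fin N) : Prop :=
  (∀ t ∈ Set.Icc (0:ℝ) (D.ℓ i), ∀ s ∈ Set.Icc (0:ℝ) (D.ℓ i), ∀ p : ℝ,
      |D.H i t p - D.H i s p| ≤ C * (1 + |p|) * |t - s|) ∧
  (∀ t ∈ Set.Icc (0:ℝ) (D.ℓ i), ∀ p q : ℝ, |D.H i t p - D.H i t q| ≤ C * |p - q|)

/-- Assumption (Hcoercive) for `H i` on the set `S`, with constant `C`. -/
def Coercive (D : Data N) (C : ℝ) (i : Fin N) (S : Set ℝ) : Prop :=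
  ∀ t ∈ S, ∀ p : ℝ, C⁻¹ * |p| - C ≤ D.H i t p

/-- Assumption (hyp-diff) for the diffusion `a i`. -/
def HypDiff (D : Data N) (i : Fin N) : Prop :=
  ∃ σ : ℝ → ℝ, (∃ C : NNReal, LipschitzOnWith C σ (Set.Icc 0 (D.ℓ i))) ∧
    ∀ t ∈ Set.Icc (0:ℝ) (D.ℓ i), D.a i t = (σ t) ^ 2

/-- Assumption (hyp-kirch) for the Kirchhoff nonlinearity `F`. -/
def Kirchhoff (D : Data N) : Prop :=
  (∀ (r s : ℝ) (p q : Fin N → ℝ), s ≤ r → (∀ i, p i ≤ q i) → D.F s q ≤ D.F r p) ∧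
  (∀ (r s : ℝ) (p q : Fin N → ℝ), s ≤ r → (∀ i, p i ≤ q i) → (∃ j, p j < q j) →
      D.F s q < D.F r p) ∧
  (∀ (i : Fin N) (r : ℝ) (p : Fin N → ℝ),
      Filter.Tendsto (fun z : ℝ => D.F r (Function.update p i z))
        Filter.atBot Filter.atTop)

/-- The steady assumptions (2.9). -/
def Steady (D : Data N) (C : ℝ) : Prop :=
  0 < C ∧ (∀ i, Ham D C i) ∧ (∀ i, HypDiff D i) ∧
  (∀ i, D.a i 0 = 0 → Coercive D C i (Set.Icc 0 (D.ℓ i))) ∧ Kirchhoff D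

/-- Assumption (hyp-dir). -/
def HypDir (D : Data N) (C : ℝ) : Prop :=
  ∀ i, 0 < D.a i (D.ℓ i) ∨
    ∃ δ > 0, Coercive D C i (Set.Icc (D.ℓ i - δ) (D.ℓ i))


/-- One-dimensional (first-order) superdifferential at `0⁺` of `w : [0,∞) → ℝ`:
`p ∈ D⁺w(0)` iff `w(t) ≤ w(0) + p t + o(t)` as `t → 0⁺`. -/
def D1plus (w : ℝ → ℝ) : Set ℝ :=
  {p | ∀ ε > 0, ∀ᶠ t in 𝓝[>] (0:ℝ), w t ≤ w 0 + p * t + ε * t}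

/-- One-dimensional (first-order) subdifferential at `0⁺`:
`q ∈ D⁻w(0)` iff `w(t) ≥ w(0) + q t + o(t)` as `t → 0⁺`. -/
def D1minus (w : ℝ → ℝ) : Set ℝ :=
  {q | ∀ ε > 0, ∀ᶠ t in 𝓝[>] (0:ℝ), w 0 + q * t - ε * t ≤ w t}

/-- `limsup_{t→0⁺} (w(t) − w(0))/t`, as an extended real. -/
noncomputable def diffQuotLimsup (w : ℝ → ℝ) : EReal :=
  Filter.limsup (fun t : ℝ => (((w t - w 0) / t : ℝ) : EReal)) (𝓝[>] (0:ℝ))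

/-- `liminf_{t→0⁺} (w(t) − w(0))/t`, as an extended real. -/
noncomputable def diffQuotLiminf (w : ℝ → ℝ) : EReal :=
  Filter.liminf (fun t : ℝ => (((w t - w 0) / t : ℝ) : EReal)) (𝓝[>] (0:ℝ))


theorem usc_exists_max {f : ℝ → ℝ} {s : Set ℝ} (hs : IsCompact s) (hne : s.Nonempty)
    (hf : UpperSemicontinuousOn f s) : ∃ x ∈ s, ∀ y ∈ s, f y ≤ f x := by
  by_contra hcon
  push_neg at hcon
  have hcon' : ∀ x ∈ s, ∃ y ∈ s, f x < f y := by
    intro x hx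
    obtain ⟨y, hy, hlt⟩ := hcon x hx
    exact ⟨y, hy, hlt⟩
  choose! y hy hfy using hcon'
  have key : ∀ x ∈ s, ∃ T : Set ℝ, T ∈ 𝓝 x ∧ ∀ z ∈ T ∩ s, f z < f (y x) := by
    intro x hx
    have h1 : ∀ᶠ z in 𝓝[s] x, f z < f (y x) := hf x hx (f (y x)) (hfy x hx)
    rw [eventually_iff, mem_nhdsWithin] at h1
    obtain ⟨U, hUo, hxU, hUsub⟩ := h1
    exact ⟨U, hUo.mem_nhds hxU, fun z hz => hUsub hz⟩
  choose! T hT hTsub using key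
  obtain ⟨t, hcover⟩ := hs.elim_nhds_subcover' (fun x hx => T x) (fun x hx => hT x hx)
  have htne : t.Nonempty := by
    obtain ⟨x0, hx0⟩ := hne
    have := hcover hx0
    simp only [Set.mem_iUnion] at this
    obtain ⟨z, hz, _⟩ := this
    exact ⟨z, hz⟩
  obtain ⟨b, hbt, hbmax⟩ := t.exists_max_image (fun x : s => f (y x)) htne
  have hyb : y (b : ℝ) ∈ s := hy b b.2
  have := hcover hyb
  simp only [Set.mem_iUnion] at this
  obtain ⟨z, hzt, hmem⟩ := this
  have h1 : f (y (b : ℝ)) < f (y (z : ℝ)) := hTsub z z.2 _ ⟨hmem, hyb⟩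
  have h2 : f (y (z : ℝ)) ≤ f (y (b : ℝ)) := hbmax z hzt
  linarith

theorem lsc_exists_min {f : ℝ → ℝ} {s : Set ℝ} (hs : IsCompact s) (hne : s.Nonempty)
    (hf : LowerSemicontinuousOn f s) : ∃ x ∈ s, ∀ y ∈ s, f x ≤ f y := by
  have husc : UpperSemicontinuousOn (fun x => -f x) s := by
    intro x hx c hc
    dsimp only at hc
    have h2 := hf x hx (-c) (by linarith)
    exact h2.mono fun z hz => by dsimp only; linarith
  obtain ⟨x, hxs, hmax⟩ := usc_exists_max hs hne husc
  exact ⟨x, hxs, fun z hz => by have := hmax z hz; simpa using this⟩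

theorem quad_hasDerivAt (c b K t : ℝ) :
    HasDerivAt (fun s : ℝ => c + (b * s + K * s ^ 2)) (b + 2 * K * t) t := by
  have hb : HasDerivAt (fun s : ℝ => b * s) b t := by
    simpa using (hasDerivAt_id t).const_mul b
  have hK : HasDerivAt (fun s : ℝ => K * s ^ 2) (K * (2 * t)) t := by
    simpa using (hasDerivAt_pow 2 t).const_mul K
  have := (hb.add hK).const_add c
  exact this.congr_deriv (by ring)

theorem quad_deriv1 (c b K : ℝ) :
    deriv (fun s : ℝ => c + (b * s + K * s ^ 2)) = fun t => b + 2 * K * t := by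
  funext t
  exact (quad_hasDerivAt c b K t).deriv

theorem quad_deriv2 (c b K t : ℝ) :
    deriv (deriv (fun s : ℝ => c + (b * s + K * s ^ 2))) t = 2 * K := by
  rw [quad_deriv1]
  have : HasDerivAt (fun s : ℝ => b + 2 * K * s) (2 * K) t := by
    simpa using ((hasDerivAt_id t).const_mul (2 * K)).const_add b
  exact this.deriv

theorem quad_contDiff (c b K : ℝ) :
    ContDiff ℝ 2 (fun s : ℝ => c + (b * s + K * s ^ 2)) :=
  contDiff_const.add ((contDiff_const.mul contDiff_id).add
    (contDiff_const.mul (contDiff_id.pow 2)))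


set_option maxHeartbeats 2000000

/-- Lemma 4.2 (iii), key lemma, degenerate branches.  Under
the steady assumptions, if `u − v` attains its maximum over `Γ` at `O`, then
for every `i ∈ 𝒟` (i.e. `a_i(O) = 0`): for all `p ∈ [p̲_i, p̄_i]`,
`λ u(O) + H_i(O,p) ≤ 0`, and for all `q ∈ (q̲_i, q̄_i)`,
`λ v(O) + H_i(O,q) ≥ 0`. -/
theorem key_lemma_degenerate (N : ℕ) (D : Data N) (C : ℝ)
    (hSteady : Steady D C)
    (u v : Fin N → ℝ → ℝ) (hu : IsSubsol D u) (hv : IsSupersol D v)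
    (hmax : ∀ i, ∀ t ∈ Set.Icc (0:ℝ) (D.ℓ i), u i t - v i t ≤ u i 0 - v i 0) :
    ∀ i, D.a i 0 = 0 →
      (∀ p : ℝ, diffQuotLiminf (u i) ≤ (p : EReal) →
        (p : EReal) ≤ diffQuotLimsup (u i) →
        D.lam * u i 0 + D.H i 0 p ≤ 0) ∧
      (∀ q : ℝ, diffQuotLiminf (v i) < (q : EReal) →
        (q : EReal) < diffQuotLimsup (v i) →
        0 ≤ D.lam * v i 0 + D.H i 0 q) := by

  obtain ⟨hC, hHam, hdiff, _hcoer, _hkirch⟩ := hSteady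
  obtain ⟨hUSCu, _hGlueu, hsubP⟩ := hu
  obtain ⟨hLSCv, _hGluev, hsupP⟩ := hv
  intro i hai0
  have hℓ := D.ℓ_pos i
  have h0Icc : (0:ℝ) ∈ Set.Icc (0:ℝ) (D.ℓ i) := ⟨le_refl _, hℓ.le⟩
  obtain ⟨σ, ⟨Lc, hLip⟩, hσ⟩ := hdiff i
  set L : ℝ := (Lc : ℝ) with hLdef
  have hL0 : (0:ℝ) ≤ L := Lc.coe_nonneg
  have hσ0 : σ 0 = 0 := by
    have h := hσ 0 h0Icc
    rw [hai0] at h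
    exact pow_eq_zero_iff (by norm_num) |>.mp h.symm
  have ha_bound : ∀ t ∈ Set.Icc (0:ℝ) (D.ℓ i), D.a i t ≤ L ^ 2 * t ^ 2 := by
    intro t ht
    have hd := hLip.dist_le_mul t ht 0 h0Icc
    rw [Real.dist_eq, Real.dist_eq, hσ0, sub_zero, sub_zero] at hd
    have h2 : D.a i t = σ t ^ 2 := hσ t ht
    rw [h2]
    calc σ t ^ 2 = |σ t| ^ 2 := (sq_abs _).symm
      _ ≤ (L * |t|) ^ 2 := by
          apply pow_le_pow_left₀ (abs_nonneg _) hd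
      _ = L ^ 2 * t ^ 2 := by rw [mul_pow, sq_abs]
  have hHamL := hHam i
  constructor
  · -- part (a): subsolution
    intro p hp1 hp2
    set K₀ : ℝ := D.lam * (|p| + 1) + C * (4 + |p|) + 4 * L ^ 2 + 3 * C with hK₀def
    have hK₀pos : 0 < K₀ := by
      have h1 : 0 ≤ D.lam * (|p| + 1) := mul_nonneg D.lam_pos.le (by positivity)
      have h2 : 0 ≤ C * (4 + |p|) := mul_nonneg hC.le (by positivity)
      have h3 : 0 ≤ 4 * L ^ 2 := by positivity
      rw [hK₀def]; nlinarith [hC]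
    suffices hkey : ∀ ε : ℝ, ε ∈ Set.Ioo (0:ℝ) 1 → D.lam * u i 0 + D.H i 0 p ≤ K₀ * ε by
      by_contra hcon
      push_neg at hcon
      set X := D.lam * u i 0 + D.H i 0 p with hX
      have hXpos : 0 < X := hcon
      have hK₀ne : K₀ ≠ 0 := hK₀pos.ne'
      have hεmem : min (1/2) (X / (2 * K₀)) ∈ Set.Ioo (0:ℝ) 1 :=
        ⟨lt_min (by norm_num) (div_pos hXpos (by linarith)),
         lt_of_le_of_lt (min_le_left _ _) (by norm_num)⟩
      have h1 := hkey _ hεmem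
      have h2 : K₀ * min (1/2) (X / (2*K₀)) ≤ K₀ * (X / (2*K₀)) :=
        mul_le_mul_of_nonneg_left (min_le_right _ _) hK₀pos.le
      have h3 : K₀ * (X / (2*K₀)) = X / 2 := by field_simp
      rw [h3] at h2
      linarith
    intro ε hεm
    obtain ⟨hε0, hε1⟩ := hεm
    have hev : Set.Ioo (0:ℝ) (min ε (D.ℓ i)) ∈ 𝓝[>] (0:ℝ) :=
      Ioo_mem_nhdsGT_of_mem ⟨le_refl _, lt_min hε0 hℓ⟩
    have hfl : ∃ᶠ t in 𝓝[>] (0:ℝ), (u i t - u i 0) / t < p + ε := by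
      have hlt : Filter.liminf (fun t : ℝ => (((u i t - u i 0) / t : ℝ) : EReal))
          (𝓝[>] (0:ℝ)) < ((p + ε : ℝ) : EReal) :=
        lt_of_le_of_lt hp1 (by exact_mod_cast (by linarith : p < p + ε))
      have hfr := Filter.frequently_lt_of_liminf_lt (h := hlt)
      exact hfr.mono fun t ht => by exact_mod_cast ht
    obtain ⟨δ, hδdq, hδmem⟩ :=
      (hfl.and_eventually (Filter.eventually_of_mem hev (fun x hx => hx))).exists
    have hδ0 : 0 < δ := hδmem.1
    have hδε : δ < ε := lt_of_lt_of_le hδmem.2 (min_le_left _ _)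
    have hδℓ : δ < D.ℓ i := lt_of_lt_of_le hδmem.2 (min_le_right _ _)
    set K : ℝ := 2 * ε / δ with hKdef
    have hK0 : 0 < K := by rw [hKdef]; positivity
    have hKδ : K * δ = 2 * ε := by rw [hKdef]; exact div_mul_cancel₀ _ hδ0.ne'
    set φ : Fin N → ℝ → ℝ := fun _ s => u i 0 + ((p - ε) * s + K * s ^ 2) with hφdef
    have hphii : φ i = fun s : ℝ => u i 0 + ((p - ε) * s + K * s ^ 2) := rfl
    have hTest : IsTest φ := ⟨fun _ _ => rfl, fun _ => quad_contDiff _ _ _⟩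
    have hIccsub : Set.Icc (0:ℝ) δ ⊆ Set.Icc 0 (D.ℓ i) := Set.Icc_subset_Icc le_rfl hδℓ.le
    have hψusc : UpperSemicontinuousOn (fun s => u i s - φ i s) (Set.Icc 0 δ) := by
      have h1 : UpperSemicontinuousOn (u i) (Set.Icc 0 δ) := (hUSCu i).mono hIccsub
      have h2 : ContinuousOn (fun s : ℝ => -(φ i s)) (Set.Icc 0 δ) := by
        rw [hphii]
        exact ((quad_contDiff (u i 0) (p - ε) K).continuous.neg).continuousOn
      simpa [sub_eq_add_neg] using h1.add h2.upperSemicontinuousOn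
    obtain ⟨τ, hτmem, hτmax⟩ :=
      usc_exists_max isCompact_Icc ⟨0, ⟨le_refl _, hδ0.le⟩⟩ hψusc
    have hfh : ∃ᶠ t in 𝓝[>] (0:ℝ), p - ε/2 < (u i t - u i 0) / t := by
      have hlt : ((p - ε/2 : ℝ) : EReal) <
          Filter.limsup (fun t : ℝ => (((u i t - u i 0) / t : ℝ) : EReal)) (𝓝[>] (0:ℝ)) :=
        lt_of_lt_of_le (by exact_mod_cast (by linarith : p - ε/2 < p)) hp2
      have hfr := Filter.frequently_lt_of_lt_limsup (h := hlt)
      exact hfr.mono fun t ht => by exact_mod_cast ht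
    have hev4 : Set.Ioo (0:ℝ) (δ/4) ∈ 𝓝[>] (0:ℝ) :=
      Ioo_mem_nhdsGT_of_mem ⟨le_refl _, by positivity⟩
    obtain ⟨s₀, hs₀dq, hs₀mem⟩ :=
      (hfh.and_eventually (Filter.eventually_of_mem hev4 (fun x hx => hx))).exists
    have hs₀0 : 0 < s₀ := hs₀mem.1
    have hs₀δ : s₀ < δ := by linarith [hs₀mem.2]
    have hquot : ∀ t : ℝ, 0 < t → (u i t - u i 0) / t * t = u i t - u i 0 := fun t ht =>
      div_mul_cancel₀ _ ht.ne'
    have hψs₀ : 0 < u i s₀ - φ i s₀ := by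
      have h1 := hquot s₀ hs₀0
      have hKs₀ : K * s₀ ≤ ε / 2 := by
        have h := mul_le_mul_of_nonneg_left hs₀mem.2.le hK0.le
        linarith [hKδ]
      have hφs : φ i s₀ = u i 0 + ((p - ε) * s₀ + K * s₀ ^ 2) := rfl
      rw [hφs]
      nlinarith [mul_pos (sub_pos.mpr hs₀dq) hs₀0,
        mul_nonneg (sub_nonneg.mpr hKs₀) hs₀0.le, h1]
    have hψτpos : 0 < u i τ - φ i τ :=
      lt_of_lt_of_le hψs₀ (hτmax s₀ ⟨hs₀0.le, hs₀δ.le⟩)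
    have hψ0 : u i 0 - φ i 0 = 0 := by
      have hφ0 : φ i 0 = u i 0 + ((p - ε) * 0 + K * 0 ^ 2) := rfl
      rw [hφ0]; ring
    have hτ0 : 0 < τ := by
      rcases hτmem.1.lt_or_eq with h | h
      · exact h
      · exfalso; rw [← h] at hψτpos; linarith [hψ0]
    have hψδneg : u i δ - φ i δ < 0 := by
      have h1 := hquot δ hδ0
      have hKδ2 : K * δ ^ 2 = 2 * ε * δ := by rw [pow_two, ← mul_assoc, hKδ]
      have hφδ : φ i δ = u i 0 + ((p - ε) * δ + K * δ ^ 2) := rfl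
      rw [hφδ]
      nlinarith [mul_pos (sub_pos.mpr hδdq) hδ0, h1, hKδ2]
    have hτδ : τ < δ :=
      lt_of_le_of_ne hτmem.2 (fun h => by rw [h] at hψτpos; linarith)
    have hloc : LocalMaxEdge D (fun j s => u j s - φ j s) i τ := by
      refine ⟨min τ (δ - τ), lt_min hτ0 (by linarith), ?_⟩
      intro s hs hclose
      have h1 : s - τ < δ - τ :=
        lt_of_le_of_lt (le_abs_self _) (lt_of_lt_of_le hclose (min_le_right _ _))
      exact hτmax s ⟨hs.1, by linarith⟩
    have hG := (hsubP φ hTest).1 i τ ⟨hτ0, lt_trans hτδ hδℓ⟩ hloc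
    have hd1 : deriv (φ i) τ = (p - ε) + 2 * K * τ := by rw [hphii, quad_deriv1]
    have hd2 : deriv (deriv (φ i)) τ = 2 * K := by rw [hphii]; exact quad_deriv2 _ _ _ _
    rw [hd1, hd2] at hG
    simp only [G] at hG
    set qτ : ℝ := (p - ε) + 2 * K * τ with hqτdef
    have hτIcc : τ ∈ Set.Icc (0:ℝ) (D.ℓ i) := ⟨hτ0.le, (lt_trans hτδ hδℓ).le⟩
    have ha_le : D.a i τ ≤ L ^ 2 * τ ^ 2 := ha_bound τ hτIcc
    have h2Kτ : 0 ≤ 2 * K * τ := by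
      have := mul_nonneg hK0.le hτ0.le; linarith
    have hKτ : 2 * K * τ ≤ 4 * ε := by
      have h := mul_le_mul_of_nonneg_left hτδ.le hK0.le
      linarith [hKδ]
    have hqτp : |qτ - p| ≤ 3 * ε := by
      rw [abs_le, hqτdef]
      constructor
      · linarith
      · linarith
    have hqabs : |qτ| ≤ |p| + 3 := by
      have h1 : |qτ| ≤ |p| + |qτ - p| := by
        calc |qτ| = |p + (qτ - p)| := by rw [show p + (qτ - p) = qτ by ring]
          _ ≤ |p| + |qτ - p| := abs_add_le _ _
      linarith
    have hHt := hHamL.1 τ hτIcc 0 h0Icc qτ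
    rw [sub_zero, abs_of_nonneg hτ0.le] at hHt
    have hHp := hHamL.2 0 h0Icc qτ p
    have hb3 : D.H i 0 p - C * (3 * ε) - C * (4 + |p|) * ε ≤ D.H i τ qτ := by
      have e1 := (abs_le.mp hHt).1
      have e2 := (abs_le.mp hHp).1
      have m1 : C * (1 + |qτ|) * τ ≤ C * (4 + |p|) * ε := by
        have mm1 : C * (1 + |qτ|) ≤ C * (4 + |p|) :=
          mul_le_mul_of_nonneg_left (by linarith) hC.le
        have mm2 : 0 ≤ C * (4 + |p|) := mul_nonneg hC.le (by positivity)
        exact mul_le_mul mm1 (by linarith) hτ0.le mm2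
      have m2 : C * |qτ - p| ≤ C * (3 * ε) := mul_le_mul_of_nonneg_left hqτp hC.le
      linarith
    have hb1 : D.lam * u i 0 - D.lam * ((|p| + 1) * ε) ≤ D.lam * u i τ := by
      have h1 : u i 0 - (|p| + 1) * ε ≤ u i τ := by
        have hφτ : φ i τ = u i 0 + ((p - ε) * τ + K * τ ^ 2) := rfl
        rw [hφτ] at hψτpos
        nlinarith [mul_nonneg (by linarith [neg_abs_le p] : (0:ℝ) ≤ p + |p|) hτ0.le,
          mul_nonneg hK0.le (sq_nonneg τ),
          mul_le_mul_of_nonneg_left (show τ ≤ ε by linarith) (by positivity : (0:ℝ) ≤ |p| + ε),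
          mul_nonneg hε0.le (show (0:ℝ) ≤ 1 - ε by linarith), abs_nonneg p]
      calc D.lam * u i 0 - D.lam * ((|p| + 1) * ε)
            = D.lam * (u i 0 - (|p| + 1) * ε) := by ring
        _ ≤ D.lam * u i τ := mul_le_mul_of_nonneg_left h1 D.lam_pos.le
    have hb2 : D.a i τ * (2 * K) ≤ 4 * L ^ 2 * ε := by
      have h1 : D.a i τ * (2 * K) ≤ L ^ 2 * τ ^ 2 * (2 * K) :=
        mul_le_mul_of_nonneg_right ha_le (by positivity)
      have hτ2 : τ ^ 2 ≤ δ ^ 2 := by nlinarith [hτ0.le, hτδ.le]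
      have hnn : 0 ≤ L ^ 2 * (2 * K) := by positivity
      have h2 : L ^ 2 * τ ^ 2 * (2 * K) ≤ L ^ 2 * δ ^ 2 * (2 * K) := by
        nlinarith [mul_nonneg hnn (sub_nonneg.mpr hτ2)]
      have h3 : L ^ 2 * δ ^ 2 * (2 * K) = 4 * L ^ 2 * ε * δ := by
        have e : L ^ 2 * δ ^ 2 * (2 * K) = 2 * L ^ 2 * δ * (K * δ) := by ring
        rw [e, hKδ]; ring
      have h4 : 4 * L ^ 2 * ε * δ ≤ 4 * L ^ 2 * ε := by
        nlinarith [mul_nonneg (show (0:ℝ) ≤ 4 * L ^ 2 * ε by positivity)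
          (show (0:ℝ) ≤ 1 - δ by linarith)]
      linarith
    have hfin : D.lam * u i 0 + D.H i 0 p ≤
        D.lam * ((|p| + 1) * ε) + C * (3 * ε) + C * (4 + |p|) * ε + 4 * L ^ 2 * ε := by
      linarith [hG, hb1, hb2, hb3]
    calc D.lam * u i 0 + D.H i 0 p
          ≤ D.lam * ((|p| + 1) * ε) + C * (3 * ε) + C * (4 + |p|) * ε + 4 * L ^ 2 * ε := hfin
      _ = K₀ * ε := by rw [hK₀def]; ring
  · -- part (b): supersolution
    intro q hq1 hq2
    set K₁ : ℝ := D.lam * |q| + C * (1 + |q|) with hK₁def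
    have hK₁nn : 0 ≤ K₁ := by
      have h1 : 0 ≤ D.lam * |q| := mul_nonneg D.lam_pos.le (abs_nonneg _)
      have h2 : 0 ≤ C * (1 + |q|) := mul_nonneg hC.le (by positivity)
      rw [hK₁def]; linarith
    suffices hkey : ∀ η : ℝ, 0 < η → -(K₁ * η) ≤ D.lam * v i 0 + D.H i 0 q by
      by_contra hcon
      push_neg at hcon
      set Y := D.lam * v i 0 + D.H i 0 q with hY
      have hYneg : Y < 0 := hcon
      have hden : (0:ℝ) < 2 * K₁ + 1 := by linarith
      have hη : 0 < -Y / (2 * K₁ + 1) := div_pos (by linarith) hden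
      have h1 := hkey _ hη
      have h2 : K₁ * (-Y / (2 * K₁ + 1)) ≤ -Y / 2 := by
        rw [mul_div_assoc', div_le_div_iff₀ hden (by norm_num : (0:ℝ) < 2)]
        nlinarith [hK₁nn, hYneg]
      linarith
    intro η hη
    have hfl : ∃ᶠ t in 𝓝[>] (0:ℝ), (v i t - v i 0) / t < q := by
      have hlt : Filter.liminf (fun t : ℝ => (((v i t - v i 0) / t : ℝ) : EReal))
          (𝓝[>] (0:ℝ)) < ((q : ℝ) : EReal) := hq1
      have hfr := Filter.frequently_lt_of_liminf_lt (h := hlt)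
      exact hfr.mono fun t ht => by exact_mod_cast ht
    have hfh : ∃ᶠ t in 𝓝[>] (0:ℝ), q < (v i t - v i 0) / t := by
      have hlt : ((q : ℝ) : EReal) <
          Filter.limsup (fun t : ℝ => (((v i t - v i 0) / t : ℝ) : EReal)) (𝓝[>] (0:ℝ)) := hq2
      have hfr := Filter.frequently_lt_of_lt_limsup (h := hlt)
      exact hfr.mono fun t ht => by exact_mod_cast ht
    have hev : Set.Ioo (0:ℝ) (min η (D.ℓ i)) ∈ 𝓝[>] (0:ℝ) :=
      Ioo_mem_nhdsGT_of_mem ⟨le_refl _, lt_min hη hℓ⟩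
    obtain ⟨r, hrdq, hrmem⟩ :=
      (hfh.and_eventually (Filter.eventually_of_mem hev (fun x hx => hx))).exists
    have hr0 : 0 < r := hrmem.1
    have hrη : r < η := lt_of_lt_of_le hrmem.2 (min_le_left _ _)
    have hrℓ : r < D.ℓ i := lt_of_lt_of_le hrmem.2 (min_le_right _ _)
    set φ : Fin N → ℝ → ℝ := fun _ s => v i 0 + (q * s + 0 * s ^ 2) with hφdef
    have hphii : φ i = fun s : ℝ => v i 0 + (q * s + 0 * s ^ 2) := rfl
    have hTest : IsTest φ := ⟨fun _ _ => rfl, fun _ => quad_contDiff _ _ _⟩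
    have hψlsc : LowerSemicontinuousOn (fun s => v i s - φ i s) (Set.Icc 0 r) := by
      have h1 : LowerSemicontinuousOn (v i) (Set.Icc 0 r) :=
        (hLSCv i).mono (Set.Icc_subset_Icc le_rfl hrℓ.le)
      have h2 : ContinuousOn (fun s : ℝ => -(φ i s)) (Set.Icc 0 r) := by
        rw [hphii]
        exact ((quad_contDiff (v i 0) q 0).continuous.neg).continuousOn
      simpa [sub_eq_add_neg] using h1.add h2.lowerSemicontinuousOn
    obtain ⟨τ, hτmem, hτmin⟩ :=
      lsc_exists_min isCompact_Icc ⟨0, ⟨le_refl _, hr0.le⟩⟩ hψlsc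
    obtain ⟨s₀, hs₀dq, hs₀mem⟩ :=
      (hfl.and_eventually (Filter.eventually_of_mem (Ioo_mem_nhdsGT
        hr0) (fun x hx => hx))).exists
    have hs₀0 : 0 < s₀ := hs₀mem.1
    have hquot : ∀ t : ℝ, 0 < t → (v i t - v i 0) / t * t = v i t - v i 0 := fun t ht =>
      div_mul_cancel₀ _ ht.ne'
    have hψs₀ : v i s₀ - φ i s₀ < 0 := by
      have h1 := hquot s₀ hs₀0
      have hφs : φ i s₀ = v i 0 + (q * s₀ + 0 * s₀ ^ 2) := rfl
      rw [hφs]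
      nlinarith [mul_pos (sub_pos.mpr hs₀dq) hs₀0, h1]
    have hψτneg : v i τ - φ i τ < 0 :=
      lt_of_le_of_lt (hτmin s₀ ⟨hs₀0.le, hs₀mem.2.le⟩) hψs₀
    have hψ0 : v i 0 - φ i 0 = 0 := by
      have hφ0 : φ i 0 = v i 0 + (q * 0 + 0 * 0 ^ 2) := rfl
      rw [hφ0]; ring
    have hτ0 : 0 < τ := by
      rcases hτmem.1.lt_or_eq with h | h
      · exact h
      · exfalso; rw [← h] at hψτneg; linarith [hψ0]
    have hψr : 0 < v i r - φ i r := by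
      have h1 := hquot r hr0
      have hφr : φ i r = v i 0 + (q * r + 0 * r ^ 2) := rfl
      rw [hφr]
      nlinarith [mul_pos (sub_pos.mpr hrdq) hr0, h1]
    have hτr : τ < r :=
      lt_of_le_of_ne hτmem.2 (fun h => by rw [h] at hψτneg; linarith)
    have hloc : LocalMinEdge D (fun j s => v j s - φ j s) i τ := by
      refine ⟨min τ (r - τ), lt_min hτ0 (by linarith), ?_⟩
      intro s hs hclose
      have h1 : s - τ < r - τ :=
        lt_of_le_of_lt (le_abs_self _) (lt_of_lt_of_le hclose (min_le_right _ _))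
      exact hτmin s ⟨hs.1, by linarith⟩
    have hG := (hsupP φ hTest).1 i τ ⟨hτ0, lt_trans hτr hrℓ⟩ hloc
    have hd1 : deriv (φ i) τ = q + 2 * 0 * τ := by rw [hphii, quad_deriv1]
    have hd2 : deriv (deriv (φ i)) τ = 2 * 0 := by rw [hphii]; exact quad_deriv2 _ _ _ _
    rw [hd1, hd2] at hG
    simp only [G] at hG
    have hq20 : q + 2 * 0 * τ = q := by ring
    rw [hq20] at hG
    have hG' : 0 ≤ D.lam * v i τ + D.H i τ q := by
      have hz : D.a i τ * (2 * 0) = 0 := by ring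
      linarith [hG, hz]
    have hτIcc : τ ∈ Set.Icc (0:ℝ) (D.ℓ i) := ⟨hτ0.le, (lt_trans hτr hrℓ).le⟩
    have hHt := hHamL.1 τ hτIcc 0 h0Icc q
    rw [sub_zero, abs_of_nonneg hτ0.le] at hHt
    have e1 := (abs_le.mp hHt).2
    have hvτ : v i τ ≤ v i 0 + |q| * τ := by
      have hφτ : φ i τ = v i 0 + (q * τ + 0 * τ ^ 2) := rfl
      rw [hφτ] at hψτneg
      nlinarith [mul_le_mul_of_nonneg_right (le_abs_self q) hτ0.le]
    have m1 : D.lam * v i τ ≤ D.lam * v i 0 + D.lam * (|q| * η) := by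
      have h1 : v i τ ≤ v i 0 + |q| * η := by
        have h2 : |q| * τ ≤ |q| * η :=
          mul_le_mul_of_nonneg_left (by linarith) (abs_nonneg _)
        linarith
      calc D.lam * v i τ ≤ D.lam * (v i 0 + |q| * η) :=
            mul_le_mul_of_nonneg_left h1 D.lam_pos.le
        _ = D.lam * v i 0 + D.lam * (|q| * η) := by ring
    have m2 : D.H i τ q ≤ D.H i 0 q + C * (1 + |q|) * η := by
      have h1 : C * (1 + |q|) * τ ≤ C * (1 + |q|) * η :=
        mul_le_mul_of_nonneg_left (by linarith) (mul_nonneg hC.le (by positivity))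
      linarith
    rw [hK₁def]
    nlinarith [hG', m1, m2]

end Paper
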